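/- For X₁ = B⁴(1) and X₂ the concave toric domain whose weight decomposition is B(1) ⊔ E(ε,1/ε)'s weights, the inclusion distance satisfies d_I(X₁,X₂) = ln(1 + 1/ε): the smallest T with X₂ ⊂ T·B⁴(1) is T = 1 + 1/ε. -/

import Mathlib

open Set

/-- The toric domain `X_Ω ⊂ ℂ²` associated to a region `Ω` in the first quadrant. -/
def toricDomain (Ω : Set (ℝ × ℝ)) : Set (ℂ × ℂ) :=
  {z | (Real.pi * ‖z.1‖ ^ 2, Real.pi * ‖z.2‖ ^ 2) ∈ Ω}

/-- Moment region of the ball `B⁴(1)`: the open triangle with legs `1`. -/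
def ballRegion : Set (ℝ × ℝ) := {p | 0 ≤ p.1 ∧ 0 ≤ p.2 ∧ p.1 + p.2 < 1}

/-- Moment region of the concave toric domain obtained by concatenating the moment
triangle of `B(1)` with that of `E(ε, 1/ε)`: the region under the convex piecewise
linear function `max(1 + 1/ε − u/ε², 1 + ε − u)`. -/
def concatRegion (ε : ℝ) : Set (ℝ × ℝ) :=
  {p | 0 ≤ p.1 ∧ 0 ≤ p.2 ∧ p.2 < max (1 + 1/ε - p.1/ε^2) (1 + ε - p.1)}

/-- The scaling `T·X = {√T z : z ∈ X}`, which multiplies the moment region by `T`. -/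
noncomputable def scaleC (T : ℝ) (X : Set (ℂ × ℂ)) : Set (ℂ × ℂ) :=
  (fun z => Real.sqrt T • z) '' X

/-- The inclusion pseudo-distance `d_I` on domains in `ℂ²` (valued in `ℝ≥0∞`). -/
noncomputable def dIC (U V : Set (ℂ × ℂ)) : ENNReal :=
  sInf {l | ∃ T : ℝ, 1 ≤ T ∧ l = ENNReal.ofReal (Real.log T) ∧
    U ⊆ scaleC T V ∧ V ⊆ scaleC T U}

lemma mem_scale_toric (T : ℝ) (hT : 0 < T) (Ω : Set (ℝ × ℝ)) (z : ℂ × ℂ) :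
    z ∈ scaleC T (toricDomain Ω) ↔
      (Real.pi * ‖z.1‖ ^ 2 / T, Real.pi * ‖z.2‖ ^ 2 / T) ∈ Ω := by
  have hs : (0:ℝ) < Real.sqrt T := Real.sqrt_pos.2 hT
  have key : ∀ c : ℂ, ‖Real.sqrt T • c‖ ^ 2 = T * ‖c‖ ^ 2 := by
    intro c
    rw [norm_smul, Real.norm_eq_abs, abs_of_nonneg hs.le, mul_pow,
      Real.sq_sqrt hT.le]
  constructor
  · rintro ⟨w, hw, rfl⟩
    have hw' : (Real.pi * ‖w.1‖ ^ 2, Real.pi * ‖w.2‖ ^ 2) ∈ Ω := hw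
    have e1 : Real.pi * ‖(Real.sqrt T • w).1‖ ^ 2 / T
        = Real.pi * ‖w.1‖ ^ 2 := by
      show Real.pi * ‖Real.sqrt T • w.1‖ ^ 2 / T = _
      rw [key]
      field_simp
    have e2 : Real.pi * ‖(Real.sqrt T • w).2‖ ^ 2 / T
        = Real.pi * ‖w.2‖ ^ 2 := by
      show Real.pi * ‖Real.sqrt T • w.2‖ ^ 2 / T = _
      rw [key]
      field_simp
    rw [e1, e2]
    exact hw'
  · intro h
    refine ⟨(Real.sqrt T)⁻¹ • z, ?_, smul_inv_smul₀ hs.ne' z⟩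
    have key2 : ∀ c : ℂ, ‖(Real.sqrt T)⁻¹ • c‖ ^ 2 = ‖c‖ ^ 2 / T := by
      intro c
      rw [norm_smul, Real.norm_eq_abs,
        abs_of_nonneg (inv_nonneg.2 hs.le), mul_pow, inv_pow, Real.sq_sqrt hT.le]
      field_simp
    show (Real.pi * ‖((Real.sqrt T)⁻¹ • z).1‖ ^ 2,
      Real.pi * ‖((Real.sqrt T)⁻¹ • z).2‖ ^ 2) ∈ Ω
    have e1 : Real.pi * ‖((Real.sqrt T)⁻¹ • z).1‖ ^ 2
        = Real.pi * ‖z.1‖ ^ 2 / T := by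
      show Real.pi * ‖(Real.sqrt T)⁻¹ • z.1‖ ^ 2 = _
      rw [key2]; ring
    have e2 : Real.pi * ‖((Real.sqrt T)⁻¹ • z).2‖ ^ 2
        = Real.pi * ‖z.2‖ ^ 2 / T := by
      show Real.pi * ‖(Real.sqrt T)⁻¹ • z.2‖ ^ 2 = _
      rw [key2]; ring
    rw [e1, e2]
    exact h

/-- For `X₁ = B⁴(1)` and `X₂` the concave toric domain concatenating `B(1)` and
`E(ε,1/ε)`, one has `d_I(X₁,X₂) = ln(1 + 1/ε)`; the smallest `T` with `X₂ ⊆ T·X₁` is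
`T = 1 + 1/ε`. -/
theorem stmt16 (ε : ℝ) (h0 : 0 < ε) (h1 : ε < 1) :
    dIC (toricDomain ballRegion) (toricDomain (concatRegion ε))
        = ENNReal.ofReal (Real.log (1 + 1/ε)) ∧
    ∀ T : ℝ, 0 < T →
      (toricDomain (concatRegion ε) ⊆ scaleC T (toricDomain ballRegion) ↔ 1 + 1/ε ≤ T) := by
  have hπ := Real.pi_pos
  have hεinv : (1:ℝ) < 1/ε := (one_lt_div h0).2 h1
  have hT0 : (0:ℝ) < 1 + 1/ε := by linarith
  -- the key characterization (second conjunct)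
  have key : ∀ T : ℝ, 0 < T →
      (toricDomain (concatRegion ε) ⊆ scaleC T (toricDomain ballRegion) ↔ 1 + 1/ε ≤ T) := by
    intro T hT
    constructor
    · intro hsub
      by_contra hc
      push_neg at hc
      set z : ℂ × ℂ := (0, (Real.sqrt (T / Real.pi) : ℝ)) with hzdef
      have hA : Real.pi * ‖z.1‖ ^ 2 = 0 := by simp [hzdef]
      have hB : Real.pi * ‖z.2‖ ^ 2 = T := by
        have : ‖((Real.sqrt (T / Real.pi) : ℝ) : ℂ)‖
            = Real.sqrt (T / Real.pi) := by
          rw [Complex.norm_real, Real.norm_eq_abs, abs_of_nonneg (Real.sqrt_nonneg _)]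
        show Real.pi * ‖((Real.sqrt (T / Real.pi) : ℝ) : ℂ)‖ ^ 2 = T
        rw [this, Real.sq_sqrt (by positivity : (0:ℝ) ≤ T / Real.pi)]
        field_simp
      have hmem : z ∈ toricDomain (concatRegion ε) := by
        show (Real.pi * ‖z.1‖ ^ 2, Real.pi * ‖z.2‖ ^ 2) ∈ concatRegion ε
        rw [hA, hB]
        refine ⟨le_rfl, hT.le, ?_⟩
        apply lt_max_of_lt_left
        simp only
        rw [zero_div]
        linarith
      have := (mem_scale_toric T hT _ z).1 (hsub hmem)
      obtain ⟨_, _, h3⟩ := this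
      simp only [hA, hB, zero_div, div_self hT.ne'] at h3
      linarith
    · intro hTle z hz
      rw [mem_scale_toric T hT]
      have hz' : (Real.pi * ‖z.1‖ ^ 2, Real.pi * ‖z.2‖ ^ 2)
          ∈ concatRegion ε := hz
      obtain ⟨hA0, hB0, hBlt⟩ := hz'
      set A := Real.pi * ‖z.1‖ ^ 2 with hAdef
      set B := Real.pi * ‖z.2‖ ^ 2 with hBdef
      refine ⟨by positivity, by positivity, ?_⟩
      show A / T + B / T < 1
      rw [← add_div, div_lt_one hT]
      have hε2 : (0:ℝ) < ε ^ 2 := by positivity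
      rcases lt_max_iff.1 hBlt with h | h
      · -- B < 1 + 1/ε - A/ε²
        have h' : B * ε ^ 2 + A < ε ^ 2 + ε := by
          have hmul := mul_lt_mul_of_pos_right h hε2
          have hexp : (1 + 1/ε - A/ε^2) * ε ^ 2 = ε ^ 2 + ε - A := by
            field_simp
          rw [hexp] at hmul
          linarith
        have h2 : ε + 1 ≤ ε * T := by
          have := mul_le_mul_of_nonneg_left hTle h0.le
          have he : ε * (1 + 1/ε) = ε + 1 := by field_simp
          linarith [he ▸ this]
        have h3 : ε ^ 2 * (A + B) < ε ^ 2 * T := by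
          nlinarith [mul_nonneg hA0 (by nlinarith : (0:ℝ) ≤ 1 - ε ^ 2)]
        exact lt_of_mul_lt_mul_left (by linarith) hε2.le
      · -- B < 1 + ε - A
        linarith
  refine ⟨?_, key⟩
  apply le_antisymm
  · apply sInf_le
    refine ⟨1 + 1/ε, by linarith, rfl, ?_, (key _ hT0).2 le_rfl⟩
    intro z hz
    rw [mem_scale_toric _ hT0]
    have hz' : (Real.pi * ‖z.1‖ ^ 2, Real.pi * ‖z.2‖ ^ 2)
        ∈ ballRegion := hz
    obtain ⟨hA0, hB0, hAB⟩ := hz'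
    set A := Real.pi * ‖z.1‖ ^ 2 with hAdef
    set B := Real.pi * ‖z.2‖ ^ 2 with hBdef
    refine ⟨by positivity, by positivity, ?_⟩
    apply lt_max_of_lt_right
    show B / (1 + 1/ε) < 1 + ε - A / (1 + 1/ε)
    have hlt : A / (1 + 1/ε) + B / (1 + 1/ε) < 1 := by
      rw [← add_div, div_lt_one hT0]
      linarith
    linarith
  · apply le_sInf
    rintro l ⟨T, hT1, rfl, _, h2⟩
    apply ENNReal.ofReal_le_ofReal
    have hle : 1 + 1/ε ≤ T := (key T (by linarith)).1 h2
    exact Real.log_le_log hT0 hle
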